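/- Let r, r_1, …, r_n be positive integers and c_1, …, c_n integers satisfying the terminal-chain relations c_i r_i = r_{i-1} + r_{i+1} for i = 1, …, n with r_0 := r and r_{n+1} := 0, and define b_0 := 0, b_1 := 1, b_{j+1} := c_j b_j − b_{j-1} for 1 ≤ j ≤ n−1. Then r divides r_i b_j − r_j b_i for all 1 ≤ i, j ≤ n. Moreover, b_n and r/r_n are coprime (note that r_n = gcd(r, r_1) divides r). -/

import Mathlib

private lemma gcd_mulsub {a d : ℤ} (h : Int.gcd a d = 1) (e : ℤ) :
    Int.gcd a (e * a - d) = 1 := by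
  rw [← Int.isCoprime_iff_gcd_eq_one] at h ⊢
  have := (h.neg_right).add_mul_left_right e
  rw [show e * a - d = -d + a * e by ring]
  exact this

/-- **Lemma 2.6 of the paper.**  For a terminal chain (`ρ 0 = r`, `ρ i = r_i`,
`ρ (n+1) = 0`) with attached sequence `b 0 = 0`, `b 1 = 1`,
`b (j+1) = c j * b j - b (j-1)` (for `1 ≤ j ≤ n-1`), one has
`r ∣ r_i b_j − r_j b_i` for all `1 ≤ i, j ≤ n`; moreover `r_n ∣ r` and
`b_n` is coprime to `r / r_n`. -/
theorem chain_b_coprime (n : ℕ) (hn : 1 ≤ n) (ρ : ℕ → ℤ) (c : ℕ → ℤ) (b : ℕ → ℤ)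
    (hpos : ∀ i ≤ n, 0 < ρ i) (hterm : ρ (n + 1) = 0)
    (hrel : ∀ i, 1 ≤ i → i ≤ n → c i * ρ i = ρ (i - 1) + ρ (i + 1))
    (hb0 : b 0 = 0) (hb1 : b 1 = 1)
    (hbrec : ∀ j, 1 ≤ j → j ≤ n - 1 → b (j + 1) = c j * b j - b (j - 1)) :
    (∀ i j, 1 ≤ i → i ≤ n → 1 ≤ j → j ≤ n → ρ 0 ∣ ρ i * b j - ρ j * b i) ∧
    ρ n ∣ ρ 0 ∧ Int.gcd (b n) (ρ 0 / ρ n) = 1 := by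
  obtain ⟨k, rfl⟩ : ∃ k, n = k + 1 := ⟨n - 1, (Nat.succ_pred_eq_of_pos hn).symm⟩
  -- step recurrence for ρ
  have hrρ : ∀ j, 1 ≤ j → j ≤ k + 1 → ρ (j + 1) = c j * ρ j - ρ (j - 1) := by
    intro j h1 h2
    have := hrel j h1 h2
    linarith
  -- ρ j ≡ ρ 1 * b j  (mod ρ 0)
  have key : ∀ j, j ≤ k + 1 → ρ 0 ∣ ρ j - ρ 1 * b j := by
    intro j
    induction j using Nat.strong_induction_on with
    | _ j ih =>
      match j with
      | 0 => intro _; simp [hb0]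
      | 1 => intro _; simp [hb1]
      | (m + 2) =>
        intro hj
        have h1 : 1 ≤ m + 1 := by omega
        have h2 : m + 1 ≤ k + 1 := by omega
        have hρ := hrρ (m + 1) h1 h2
        have hb := hbrec (m + 1) h1 (by omega)
        simp only [Nat.add_sub_cancel] at hρ hb
        have d1 := ih (m + 1) (by omega) (by omega)
        have d2 := ih m (by omega) (by omega)
        have : ρ (m + 2) - ρ 1 * b (m + 2)
            = c (m + 1) * (ρ (m + 1) - ρ 1 * b (m + 1)) - (ρ m - ρ 1 * b m) := by
          rw [hρ, hb]; ring
        rw [this]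
        exact dvd_sub (Dvd.dvd.mul_left d1 _) d2
  -- Wronskian is constant
  have wron : ∀ j, j ≤ k → ρ j * b (j + 1) - ρ (j + 1) * b j = ρ 0 := by
    intro j
    induction j with
    | zero => intro _; simp [hb0, hb1]
    | succ m ih =>
      intro hj
      have hρ := hrρ (m + 1) (by omega) (by omega)
      have hb := hbrec (m + 1) (by omega) (by omega)
      simp only [Nat.add_sub_cancel] at hρ hb
      have := ih (by omega)
      rw [hρ, hb]; linear_combination this
  -- gcd of consecutive b's is 1
  have gcdb : ∀ j, j ≤ k → Int.gcd (b j) (b (j + 1)) = 1 := by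
    intro j
    induction j with
    | zero => intro _; simp [hb0, hb1]
    | succ m ih =>
      intro hj
      have hb := hbrec (m + 1) (by omega) (by omega)
      simp only [Nat.add_sub_cancel] at hb
      have ihm := ih (by omega)
      rw [Int.gcd_comm] at ihm
      rw [hb]
      exact gcd_mulsub ihm (c (m + 1))
  have hW := wron k le_rfl
  have hrn := hrel (k + 1) (by omega) le_rfl
  simp only [Nat.add_sub_cancel, hterm, add_zero] at hrn
  -- ρ 0 = ρ (k+1) * (c (k+1) * b (k+1) - b k)
  have hfac : ρ 0 = ρ (k + 1) * (c (k + 1) * b (k + 1) - b k) := by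
    rw [← hW, ← hrn]; ring
  have hρn_pos := hpos (k + 1) le_rfl
  have hρn_ne : ρ (k + 1) ≠ 0 := ne_of_gt hρn_pos
  refine ⟨?_, ⟨_, hfac⟩, ?_⟩
  · intro i j hi1 hin hj1 hjn
    have di := key i hin
    have dj := key j hjn
    have : ρ i * b j - ρ j * b i
        = (ρ i - ρ 1 * b i) * b j - (ρ j - ρ 1 * b j) * b i := by ring
    rw [this]
    exact dvd_sub (di.mul_right _) (dj.mul_right _)
  · have hdiv : ρ 0 / ρ (k + 1) = c (k + 1) * b (k + 1) - b k := by
      rw [hfac, Int.mul_ediv_cancel_left _ hρn_ne]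
    rw [hdiv]
    have := gcdb k le_rfl
    rw [Int.gcd_comm] at this
    exact gcd_mulsub this (c (k + 1))
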